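/- Let T be a bounded operator on a Hilbert space H with closed invariant subspace N, written in block form [[A, B], [0, D]] relative to H = N ⊕ N⊥. If [T*, T] is compact, then [A*, A] is compact if and only if [D*, D] is compact. -/

import Mathlib

open ContinuousLinearMap Metric Set

section aux
variable {H : Type*} [NormedAddCommGroup H] [InnerProductSpace ℂ H] [CompleteSpace H]

private lemma norm_sq_le_aux' (S : H →L[ℂ] H) (z : H) :
    ‖S z‖ ^ 2 ≤ ‖(adjoint S ∘L S) z‖ * ‖z‖ := by
  have h1 : (inner ℂ (S z) (S z) : ℂ) = inner ℂ ((adjoint S ∘L S) z) z := by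
    simp [adjoint_inner_left]
  have h2 : ‖(inner ℂ (S z) (S z) : ℂ)‖ = ‖S z‖ ^ 2 := by
    rw [inner_self_eq_norm_sq_to_K]; simp [sq_abs]
  calc ‖S z‖ ^ 2 = ‖(inner ℂ ((adjoint S ∘L S) z) z : ℂ)‖ := by rw [← h1, h2]
    _ ≤ ‖(adjoint S ∘L S) z‖ * ‖z‖ := norm_inner_le_norm _ _

private lemma compact_of_adjoint_comp_self' (S : H →L[ℂ] H)
    (h : IsCompactOperator ⇑(adjoint S ∘L S)) : IsCompactOperator ⇑S := by
  rw [isCompactOperator_iff_exists_mem_nhds_isCompact_closure_image]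
  refine ⟨closedBall 0 1, closedBall_mem_nhds _ one_pos, ?_⟩
  refine TotallyBounded.isCompact_of_isClosed (TotallyBounded.closure ?_) isClosed_closure
  rw [Metric.totallyBounded_iff]
  intro ε hε
  set C := adjoint S ∘L S with hC
  have hTB : TotallyBounded (⇑C '' closedBall (0:H) 1) := by
    obtain ⟨K, hKc, hKs⟩ := h.image_closedBall_subset_compact 1
    exact hKc.totallyBounded.subset hKs
  obtain ⟨t, hts, htf, htc⟩ := totallyBounded_iff_subset.mp hTB _
    (dist_mem_uniformity (show (0:ℝ) < ε^2/4 by positivity))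
  choose g hg1 hg2 using fun (c : H) (hc : c ∈ t) => hts hc
  classical
  refine ⟨(fun c => if hc : c ∈ t then S (g c hc) else 0) '' t, htf.image _, ?_⟩
  rintro y ⟨x, hx, rfl⟩
  have hCx : C x ∈ ⋃ c ∈ t, {w | dist w c < ε^2/4} := htc ⟨x, hx, rfl⟩
  simp only [mem_iUnion, mem_setOf_eq] at hCx
  obtain ⟨c, hct, hdist⟩ := hCx
  refine mem_iUnion₂.mpr ⟨S (g c hct), ⟨c, hct, by simp [hct]⟩, ?_⟩
  have hxball : ‖x - g c hct‖ ≤ 2 := by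
    have h1 : ‖x‖ ≤ 1 := by simpa using hx
    have h2 : ‖g c hct‖ ≤ 1 := by simpa using hg1 c hct
    calc ‖x - g c hct‖ ≤ ‖x‖ + ‖g c hct‖ := norm_sub_le _ _
      _ ≤ 2 := by linarith
  have key : ‖S x - S (g c hct)‖ ^ 2 ≤ ‖C x - C (g c hct)‖ * 2 := by
    have := norm_sq_le_aux' S (x - g c hct)
    rw [map_sub, map_sub] at this
    calc ‖S x - S (g c hct)‖ ^ 2 ≤ ‖C x - C (g c hct)‖ * ‖x - g c hct‖ := this
      _ ≤ ‖C x - C (g c hct)‖ * 2 := mul_le_mul_of_nonneg_left hxball (norm_nonneg _)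
  have hd : ‖C x - C (g c hct)‖ < ε^2/4 := by
    rw [hg2 c hct]
    simpa [dist_eq_norm] using hdist
  have hfin : ‖S x - S (g c hct)‖ < ε := by nlinarith [norm_nonneg (S x - S (g c hct))]
  simpa [mem_ball, dist_eq_norm] using hfin

end aux

private lemma key1_ring' {R : Type*} [Ring R] [StarRing R] (p t : R) (hp : p * p = p)
    (hps : star p = p) (htp : t * p = p * (t * p)) :
    star (p * (t * p)) * (p * (t * p)) - (p * (t * p)) * star (p * (t * p))
      = p * ((star t * t - t * star t) * p) + (p * (t * (1 - p))) * star (p * (t * (1 - p))) := by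
  have hps' : p * star t = p * (star t * p) := by
    have h := congrArg star htp
    simp only [star_mul, hps, mul_assoc] at h
    exact h
  have hp' : ∀ x : R, p * (p * x) = p * x := fun x => by rw [← mul_assoc, hp]
  simp only [star_mul, hps, mul_sub, sub_mul, mul_add, add_mul, mul_one, one_mul, star_sub,
    star_one, mul_assoc, hp']
  rw [← htp]
  abel

private lemma key2_ring' {R : Type*} [Ring R] [StarRing R] (q t : R) (hq : q * q = q)
    (hqs : star q = q) (hqt : q * t = q * (t * q)) :
    star (q * (t * q)) * (q * (t * q)) - (q * (t * q)) * star (q * (t * q))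
      = q * ((star t * t - t * star t) * q) - star ((1 - q) * (t * q)) * ((1 - q) * (t * q)) := by
  have hqs' : star t * q = q * (star t * q) := by
    have h := congrArg star hqt
    simp only [star_mul, hqs, mul_assoc] at h
    exact h
  have hq' : ∀ x : R, q * (q * x) = q * x := fun x => by rw [← mul_assoc, hq]
  simp only [star_mul, star_sub, star_one, hqs, mul_sub, sub_mul, mul_add, add_mul,
    mul_one, one_mul, mul_assoc, hq']
  simp only [← hqs', ← hqt]
  abel

/-- if `[T*,T]` is compact then `[A*,A]` is compact iff `[D*,D]`
is compact, where `T = [[A,B],[0,D]]` relative to `H = N ⊕ Nᗮ` (blocks realized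
as compressions via the projection `P` onto the invariant subspace `N`). -/
theorem compact_selfCommutator_restriction_iff_quotient
    {H : Type*} [NormedAddCommGroup H] [InnerProductSpace ℂ H] [CompleteSpace H]
    (N : Submodule ℂ H) [CompleteSpace N]
    (P : H →L[ℂ] H) (hP : P = N.subtypeL ∘L N.orthogonalProjection)
    (T A B D : H →L[ℂ] H)
    (hA : A = P ∘L T ∘L P)
    (hB : B = P ∘L T ∘L (1 - P))
    (hD : D = (1 - P) ∘L T ∘L (1 - P))
    (hinv : (1 - P) ∘L T ∘L P = 0)
    (hT : IsCompactOperator ⇑(adjoint T ∘L T - T ∘L adjoint T)) :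
    IsCompactOperator ⇑(adjoint A ∘L A - A ∘L adjoint A) ↔
      IsCompactOperator ⇑(adjoint D ∘L D - D ∘L adjoint D) := by
  have hPs : star P = P := by rw [hP]; exact isSelfAdjoint_starProjection N
  have hP2 : P * P = P := by
    rw [hP]; ext x
    simp [ContinuousLinearMap.mul_apply, Submodule.starProjection_eq_self_iff]
  have hinv0 : (1 - P) * (T * P) = 0 := hinv
  have hTP : T * P = P * (T * P) := by
    have h := hinv0
    rw [sub_mul, one_mul, sub_eq_zero] at h
    exact h
  have hQT : (1 - P) * T = (1 - P) * (T * (1 - P)) := by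
    simp [mul_sub, mul_one, hinv0]
  have hQ2 : (1 - P) * (1 - P) = 1 - P := by
    rw [mul_sub, mul_one, sub_mul, one_mul, hP2, sub_self, sub_zero]
  have hQs : star (1 - P) = 1 - P := by rw [star_sub, star_one, hPs]
  have eA : adjoint A ∘L A - A ∘L adjoint A
      = P ∘L ((adjoint T ∘L T - T ∘L adjoint T) ∘L P) + B ∘L adjoint B := by
    rw [hA, hB]
    simp only [← ContinuousLinearMap.mul_def, ← star_eq_adjoint]
    exact key1_ring' P T hP2 hPs hTP
  have eD : adjoint D ∘L D - D ∘L adjoint D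
      = (1 - P) ∘L ((adjoint T ∘L T - T ∘L adjoint T) ∘L (1 - P)) - adjoint B ∘L B := by
    rw [hD, hB]
    simp only [← ContinuousLinearMap.mul_def, ← star_eq_adjoint]
    have k2 := key2_ring' (1 - P) T hQ2 hQs hQT
    rwa [sub_sub_cancel] at k2
  have hC1 : IsCompactOperator
      ⇑(P ∘L ((adjoint T ∘L T - T ∘L adjoint T) ∘L P)) := by
    rw [ContinuousLinearMap.coe_comp', ContinuousLinearMap.coe_comp']
    exact (hT.comp_clm P).clm_comp P
  have hC2 : IsCompactOperator
      ⇑((1 - P) ∘L ((adjoint T ∘L T - T ∘L adjoint T) ∘L (1 - P))) := by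
    rw [ContinuousLinearMap.coe_comp', ContinuousLinearMap.coe_comp']
    exact (hT.comp_clm (1 - P)).clm_comp (1 - P)
  constructor
  · intro h
    have hBB : IsCompactOperator ⇑(B ∘L adjoint B) := by
      have e : B ∘L adjoint B = (adjoint A ∘L A - A ∘L adjoint A)
          - P ∘L ((adjoint T ∘L T - T ∘L adjoint T) ∘L P) := by rw [eA]; abel
      rw [e, ContinuousLinearMap.coe_sub']
      exact h.sub hC1
    have hBadj : IsCompactOperator ⇑(adjoint B) :=
      compact_of_adjoint_comp_self' _ (by rwa [adjoint_adjoint])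
    have hB'B : IsCompactOperator ⇑(adjoint B ∘L B) := by
      rw [ContinuousLinearMap.coe_comp']; exact hBadj.comp_clm B
    rw [eD, ContinuousLinearMap.coe_sub']
    exact hC2.sub hB'B
  · intro h
    have hB'B : IsCompactOperator ⇑(adjoint B ∘L B) := by
      have e : adjoint B ∘L B = (1 - P) ∘L ((adjoint T ∘L T - T ∘L adjoint T) ∘L (1 - P))
          - (adjoint D ∘L D - D ∘L adjoint D) := by rw [eD]; abel
      rw [e, ContinuousLinearMap.coe_sub']
      exact hC2.sub h
    have hBc : IsCompactOperator ⇑B := compact_of_adjoint_comp_self' _ hB'B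
    have hBB : IsCompactOperator ⇑(B ∘L adjoint B) := by
      rw [ContinuousLinearMap.coe_comp']; exact hBc.comp_clm (adjoint B)
    rw [eA, ContinuousLinearMap.coe_add']
    exact hC1.add hBB
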